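/- arXiv:1810.07360 — 4 statements merged into one kernel-verified Lean document; each statement's English description precedes it below -/
import Mathlib

section
/- For every integer r ≥ 2, every integer s ≥ 1, and all natural numbers m₁, …, m_s, the function f : ℕ → ℂ given by f(n) = ∏_{i=1}^{s} μ_r(n+m_i) is strongly asymptotically periodic. -/
open Filter Finset
open scoped Classical

/-- The mean `E_ω(g)` of a bounded function `g : ℕ → ℝ` along an ultrafilter `ω` on `ℕ`:
the limit along `ω` of the Cesàro averages `N ↦ (1/N) ∑_{n=0}^{N-1} g n`. -/
noncomputable def meanAlong (ω : Ultrafilter ℕ) (g : ℕ → ℝ) : ℝ :=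
  limUnder (ω : Filter ℕ) (fun N : ℕ => (∑ n ∈ Finset.range N, g n) / N)

/-- A bounded function `f : ℕ → ℂ` is strongly asymptotically periodic if for every
nonprincipal ultrafilter `ω` on `ℕ` there is a sequence `(n_j)` of positive integers
such that `sup_{l ∈ ℕ} E_ω(|f(·+l·n_j) − f|²) → 0` as `j → ∞`. -/
def StronglyAsymptoticallyPeriodic (f : ℕ → ℂ) : Prop :=
  ∀ ω : Ultrafilter ℕ, (ω : Filter ℕ) ≤ Filter.cofinite →
    ∃ nj : ℕ → ℕ, (∀ j, 0 < nj j) ∧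
      Filter.Tendsto
        (fun j => ⨆ l : ℕ, meanAlong ω (fun n => ‖f (n + l * nj j) - f n‖ ^ 2))
        Filter.atTop (nhds 0)

/-- `μ_r(n) = 1` if `n` is `r`-th power-free (no prime `p` satisfies `p^r ∣ n`),
and `μ_r(n) = 0` otherwise. -/
noncomputable def muR (r : ℕ) (n : ℕ) : ℂ :=
  if ∀ p : ℕ, p.Prime → ¬ p ^ r ∣ n then 1 else 0

/-! ### Auxiliary lemmas -/

lemma count_dvd_le (q c N : ℕ) (hq : 0 < q) :
    (Finset.filter (fun n => q ∣ n + c) (Finset.range N)).card ≤ N / q + 2 := by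
  classical
  have h := Finset.card_le_card_of_injOn (fun n => (n + c) / q)
    (s := Finset.filter (fun n => q ∣ n + c) (Finset.range N))
    (t := Finset.Icc (c / q) ((c + N) / q))
    (fun n hn => by
      simp only [Finset.mem_coe, Finset.coe_filter, Set.mem_setOf_eq, Finset.mem_filter, Finset.mem_range] at hn
      simp only [Finset.mem_coe, Finset.mem_Icc]
      exact ⟨Nat.div_le_div_right (by omega), Nat.div_le_div_right (by omega)⟩)
    (fun a ha b hb hab => by
      simp only [Finset.coe_filter, Set.mem_setOf_eq, Finset.mem_range] at ha hb
      have hab' : (a + c) / q = (b + c) / q := hab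
      have h1 := Nat.div_mul_cancel ha.2
      have h2 := Nat.div_mul_cancel hb.2
      rw [hab'] at h1
      omega)
  refine h.trans ?_
  rw [Nat.card_Icc]
  have h3 : (c + N) / q ≤ c / q + N / q + 1 := by
    rw [Nat.add_div hq]; split <;> omega
  have h4 : c / q ≤ (c + N) / q := Nat.div_le_div_right (by omega)
  omega

lemma card_bad_le (r j c N : ℕ) (hr : 2 ≤ r) :
    (Finset.filter (fun n => ∃ p, Nat.Prime p ∧ j < p ∧ p ^ r ∣ n + c) (Finset.range N)).card
      ≤ 1 + ∑ p ∈ Finset.Ioo j (Nat.sqrt (N + c) + 1),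
          (Finset.filter (fun n => p ^ r ∣ n + c) (Finset.range N)).card := by
  classical
  have hsub : Finset.filter (fun n => ∃ p, Nat.Prime p ∧ j < p ∧ p ^ r ∣ n + c) (Finset.range N)
      ⊆ insert 0 ((Finset.Ioo j (Nat.sqrt (N + c) + 1)).biUnion
          (fun p => Finset.filter (fun n => p ^ r ∣ n + c) (Finset.range N))) := by
    intro n hn
    simp only [Finset.mem_filter, Finset.mem_range] at hn
    obtain ⟨hnN, p, hp, hjp, hdvd⟩ := hn
    by_cases h0 : n + c = 0
    · simp [show n = 0 by omega]
    · have hple : p ^ r ≤ n + c := Nat.le_of_dvd (by omega) hdvd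
      have hpp : p * p ≤ p ^ r := by
        calc p * p = p ^ 2 := (sq p).symm
        _ ≤ p ^ r := Nat.pow_le_pow_right hp.pos hr
      have hps : p ≤ Nat.sqrt (N + c) := Nat.le_sqrt.2 (by omega)
      refine Finset.mem_insert_of_mem (Finset.mem_biUnion.2 ⟨p, ?_, ?_⟩)
      · simp only [Finset.mem_Ioo]; omega
      · simp only [Finset.mem_filter, Finset.mem_range]; exact ⟨hnN, hdvd⟩
  refine (Finset.card_le_card hsub).trans ?_
  refine (Finset.card_insert_le _ _).trans ?_
  rw [add_comm 1]
  exact Nat.add_le_add_right ((Finset.card_biUnion_le (s := Finset.Ioo j (Nat.sqrt (N + c) + 1))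
    (t := fun p => Finset.filter (fun n => p ^ r ∣ n + c) (Finset.range N)))) 1

lemma sum_ind_le (r j c N : ℕ) (hr : 2 ≤ r) :
    (∑ n ∈ Finset.range N, (if ∃ p, Nat.Prime p ∧ j < p ∧ p ^ r ∣ n + c then (1:ℝ) else 0))
      ≤ (N:ℝ) * (2/(j+1)) + (2 * Nat.sqrt (N + c) + 3) := by
  classical
  set K := Nat.sqrt (N + c) with hK
  have hsum : (∑ n ∈ Finset.range N, (if ∃ p, Nat.Prime p ∧ j < p ∧ p ^ r ∣ n + c then (1:ℝ) else 0))
      = ((Finset.filter (fun n => ∃ p, Nat.Prime p ∧ j < p ∧ p ^ r ∣ n + c) (Finset.range N)).card : ℝ) := by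
    rw [Finset.sum_boole]
  rw [hsum]
  have h1 := card_bad_le r j c N hr
  have h2 : ((Finset.filter (fun n => ∃ p, Nat.Prime p ∧ j < p ∧ p ^ r ∣ n + c) (Finset.range N)).card : ℝ)
      ≤ 1 + ∑ p ∈ Finset.Ioo j (K + 1),
          (((Finset.filter (fun n => p ^ r ∣ n + c) (Finset.range N)).card : ℝ)) := by
    exact_mod_cast h1
  refine h2.trans ?_
  have h3 : ∀ p ∈ Finset.Ioo j (K + 1),
      (((Finset.filter (fun n => p ^ r ∣ n + c) (Finset.range N)).card : ℝ))
        ≤ (N:ℝ) * ((p:ℝ)^2)⁻¹ + 2 := by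
    intro p hp
    simp only [Finset.mem_Ioo] at hp
    have hp1 : 1 ≤ p := by omega
    have hq : 0 < p ^ r := Nat.pow_pos (by omega)
    have hc := count_dvd_le (p ^ r) c N hq
    have hc' : (((Finset.filter (fun n => p ^ r ∣ n + c) (Finset.range N)).card : ℝ))
        ≤ ((N / p ^ r : ℕ) : ℝ) + 2 := by exact_mod_cast hc
    refine hc'.trans (add_le_add_left ?_ 2)
    refine (Nat.cast_div_le).trans ?_
    rw [div_eq_mul_inv]
    push_cast
    refine mul_le_mul_of_nonneg_left ?_ (by positivity)
    refine inv_anti₀ (by positivity) ?_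
    exact_mod_cast (by calc p^2 ≤ p ^ r := Nat.pow_le_pow_right hp1 hr)
  refine (add_le_add_right (Finset.sum_le_sum h3) 1).trans ?_
  rw [Finset.sum_add_distrib, ← Finset.mul_sum, Finset.sum_const, Nat.card_Ioo]
  have h4 : (∑ p ∈ Finset.Ioo j (K + 1), ((p:ℝ)^2)⁻¹) ≤ 2 / (j + 1) := sum_Ioo_inv_sq_le j (K+1)
  have h5 : ((K + 1 - j - 1 : ℕ) : ℝ) ≤ (K : ℝ) := by
    have : K + 1 - j - 1 ≤ K := by omega
    exact_mod_cast this
  have h6 : (N:ℝ) * (∑ p ∈ Finset.Ioo j (K + 1), ((p:ℝ)^2)⁻¹) ≤ (N:ℝ) * (2/(j+1)) :=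
    mul_le_mul_of_nonneg_left h4 (by positivity)
  have : (K + 1 - j - 1 : ℕ) • (2:ℝ) ≤ 2 * K := by
    rw [nsmul_eq_mul]; nlinarith [h5]
  nlinarith [h6, this]

lemma muR_zero_or_one (r x : ℕ) : muR r x = 0 ∨ muR r x = 1 := by
  unfold muR; split <;> simp

lemma prod_muR_zero_or_one (r : ℕ) (g : ℕ → ℕ) (t : Finset ℕ) :
    (∏ i ∈ t, muR r (g i)) = 0 ∨ (∏ i ∈ t, muR r (g i)) = 1 := by
  classical
  induction t using Finset.induction_on with
  | empty => simp
  | @insert a t ha ih =>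
    rw [Finset.prod_insert ha]
    rcases muR_zero_or_one r (g a) with h1 | h1 <;> rcases ih with h2 | h2 <;>
      simp [h1, h2]

lemma norm_sq_diff_le_one {a b : ℂ} (ha : a = 0 ∨ a = 1) (hb : b = 0 ∨ b = 1) :
    ‖a - b‖ ^ 2 ≤ 1 := by
  rcases ha with h | h <;> rcases hb with h' | h' <;> simp [h, h']

lemma pointwise_bound (r s j : ℕ) (m : ℕ → ℕ) (L : ℕ)
    (hL : ∀ p, Nat.Prime p → p ≤ j → p ^ r ∣ L) (n : ℕ) :
    ‖(∏ i ∈ Finset.Icc 1 s, muR r (n + L + m i)) - ∏ i ∈ Finset.Icc 1 s, muR r (n + m i)‖ ^ 2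
      ≤ ∑ i ∈ Finset.Icc 1 s,
          ((if ∃ p, Nat.Prime p ∧ j < p ∧ p ^ r ∣ n + m i then (1:ℝ) else 0)
            + (if ∃ p, Nat.Prime p ∧ j < p ∧ p ^ r ∣ n + (L + m i) then (1:ℝ) else 0)) := by
  classical
  have hterm_nonneg : ∀ i ∈ Finset.Icc 1 s,
      (0:ℝ) ≤ (if ∃ p, Nat.Prime p ∧ j < p ∧ p ^ r ∣ n + m i then (1:ℝ) else 0)
        + (if ∃ p, Nat.Prime p ∧ j < p ∧ p ^ r ∣ n + (L + m i) then (1:ℝ) else 0) := by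
    intro i _; have : ∀ (P : Prop) [Decidable P], (0:ℝ) ≤ if P then (1:ℝ) else 0 := by
      intro P _; split <;> norm_num
    exact add_nonneg (this _) (this _)
  by_cases H : ∀ i ∈ Finset.Icc 1 s, muR r (n + L + m i) = muR r (n + m i)
  · rw [Finset.prod_congr rfl H, sub_self]
    simpa using Finset.sum_nonneg hterm_nonneg
  · push_neg at H
    obtain ⟨i, hi, hne⟩ := H
    have key : (∃ p, Nat.Prime p ∧ j < p ∧ p ^ r ∣ n + m i)
        ∨ (∃ p, Nat.Prime p ∧ j < p ∧ p ^ r ∣ n + (L + m i)) := by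
      by_cases hA : ∀ p : ℕ, p.Prime → ¬ p ^ r ∣ n + m i <;>
        by_cases hB : ∀ p : ℕ, p.Prime → ¬ p ^ r ∣ n + L + m i
      · exact absurd (by simp only [muR]; rw [if_pos hA, if_pos hB]) hne
      · push_neg at hB
        obtain ⟨p, hp, hd⟩ := hB
        right
        rcases le_or_gt p j with hpj | hpj
        · exfalso
          have hdL : p ^ r ∣ L := hL p hp hpj
          have hd' : p ^ r ∣ n + m i := by
            have h1 : p ^ r ∣ n + m i + L := by
              rwa [show n + m i + L = n + L + m i by ring]
            exact (Nat.dvd_add_iff_left hdL).mpr h1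
          exact hA p hp hd'
        · exact ⟨p, hp, hpj, by rwa [show n + (L + m i) = n + L + m i by ring]⟩
      · push_neg at hA
        obtain ⟨p, hp, hd⟩ := hA
        rcases le_or_gt p j with hpj | hpj
        · exfalso
          have hdL : p ^ r ∣ L := hL p hp hpj
          have hd' : p ^ r ∣ n + L + m i := by
            rw [show n + L + m i = n + m i + L by ring]
            exact Dvd.dvd.add hd hdL
          exact hB p hp hd'
        · exact Or.inl ⟨p, hp, hpj, hd⟩
      · exact absurd (by simp only [muR]; rw [if_neg hA, if_neg hB]) hne
    have h1 : ‖(∏ i ∈ Finset.Icc 1 s, muR r (n + L + m i))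
        - ∏ i ∈ Finset.Icc 1 s, muR r (n + m i)‖ ^ 2 ≤ 1 :=
      norm_sq_diff_le_one (prod_muR_zero_or_one r _ _) (prod_muR_zero_or_one r _ _)
    refine h1.trans ?_
    have h2 : (1:ℝ) ≤ (if ∃ p, Nat.Prime p ∧ j < p ∧ p ^ r ∣ n + m i then (1:ℝ) else 0)
        + (if ∃ p, Nat.Prime p ∧ j < p ∧ p ^ r ∣ n + (L + m i) then (1:ℝ) else 0) := by
      rcases key with hk | hk
      · rw [if_pos hk]
        have : (0:ℝ) ≤ if ∃ p, Nat.Prime p ∧ j < p ∧ p ^ r ∣ n + (L + m i) then (1:ℝ) else 0 := by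
          split <;> norm_num
        linarith
      · rw [if_pos hk]
        have : (0:ℝ) ≤ if ∃ p, Nat.Prime p ∧ j < p ∧ p ^ r ∣ n + m i then (1:ℝ) else 0 := by
          split <;> norm_num
        linarith
    exact h2.trans (Finset.single_le_sum hterm_nonneg hi)

lemma nat_sqrt_add_le (N c : ℕ) : Nat.sqrt (N + c) ≤ Nat.sqrt N + c + 1 := by
  have h1 : N < (Nat.sqrt N + 1) * (Nat.sqrt N + 1) := Nat.lt_succ_sqrt N
  have : Nat.sqrt (N + c) < Nat.sqrt N + c + 2 := by
    rw [Nat.sqrt_lt]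
    nlinarith
  omega

lemma nat_sqrt_cast_le (N : ℕ) : ((Nat.sqrt N : ℝ)) ≤ Real.sqrt N := by
  rw [show ((Nat.sqrt N : ℝ)) = Real.sqrt ((Nat.sqrt N : ℝ)^2) by
    rw [Real.sqrt_sq (by positivity)]]
  apply Real.sqrt_le_sqrt
  exact_mod_cast Nat.sqrt_le' N

lemma real_sqrt_atTop' : Tendsto Real.sqrt atTop atTop := by
  apply tendsto_atTop_atTop.2
  intro b
  refine ⟨max 0 b ^ 2, fun a ha => le_trans (le_max_right 0 b) ?_⟩
  rw [← Real.sqrt_sq (le_max_left 0 b)]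
  exact Real.sqrt_le_sqrt ha

lemma sqrt_div_tendsto (c : ℕ) :
    Tendsto (fun N : ℕ => ((Nat.sqrt (N + c) : ℝ)) / N) atTop (nhds 0) := by
  have hsq : Tendsto (fun N : ℕ => (Real.sqrt N)⁻¹) atTop (nhds 0) :=
    (real_sqrt_atTop'.comp tendsto_natCast_atTop_atTop).inv_tendsto_atTop
  have hc : Tendsto (fun N : ℕ => ((c:ℝ) + 1) / N) atTop (nhds 0) :=
    tendsto_const_div_atTop_nhds_zero_nat _
  have hg : Tendsto (fun N : ℕ => (Real.sqrt N)⁻¹ + ((c:ℝ) + 1) / N) atTop (nhds 0) := by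
    simpa using hsq.add hc
  apply squeeze_zero' (g := fun N : ℕ => (Real.sqrt N)⁻¹ + ((c:ℝ) + 1) / N)
  · exact Filter.Eventually.of_forall fun N => by positivity
  · filter_upwards [Filter.eventually_ge_atTop 1] with N hN
    have hN0 : (0:ℝ) < N := by exact_mod_cast hN
    have h1 : ((Nat.sqrt (N + c) : ℝ)) ≤ Real.sqrt N + (c + 1) := by
      have := nat_sqrt_add_le N c
      have h2 : ((Nat.sqrt (N + c) : ℝ)) ≤ ((Nat.sqrt N : ℝ)) + c + 1 := by exact_mod_cast this
      have h3 := nat_sqrt_cast_le N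
      linarith
    have hs0 : (0:ℝ) < Real.sqrt N := Real.sqrt_pos.2 hN0
    have hss : Real.sqrt (N:ℝ) / N = (Real.sqrt N)⁻¹ := by
      rw [inv_eq_one_div, div_eq_div_iff hN0.ne' hs0.ne', one_mul]
      exact (Real.mul_self_sqrt hN0.le)
    calc ((Nat.sqrt (N + c) : ℝ)) / N ≤ (Real.sqrt N + (c + 1)) / N := by gcongr
      _ = Real.sqrt N / N + ((c:ℝ) + 1) / N := by ring
      _ = (Real.sqrt N)⁻¹ + ((c:ℝ) + 1) / N := by rw [hss]
  · exact hg

lemma mean_bound (r s : ℕ) (hr : 2 ≤ r) (m : ℕ → ℕ) (ω : Ultrafilter ℕ)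
    (hω : (ω : Filter ℕ) ≤ Filter.cofinite) (j L : ℕ)
    (hL : ∀ p, Nat.Prime p → p ≤ j → p ^ r ∣ L) :
    meanAlong ω (fun n => ‖(∏ i ∈ Finset.Icc 1 s, muR r (n + L + m i))
        - ∏ i ∈ Finset.Icc 1 s, muR r (n + m i)‖ ^ 2) ∈ Set.Icc (0:ℝ) (4 * s / (j + 1)) := by
  classical
  set h : ℕ → ℝ := fun n => ‖(∏ i ∈ Finset.Icc 1 s, muR r (n + L + m i))
      - ∏ i ∈ Finset.Icc 1 s, muR r (n + m i)‖ ^ 2 with hh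
  set A : ℕ → ℝ := fun N => (∑ n ∈ Finset.range N, h n) / N with hAdef
  have hA01 : ∀ N, A N ∈ Set.Icc (0:ℝ) 1 := by
    intro N
    constructor
    · exact div_nonneg (Finset.sum_nonneg fun n _ => by positivity) (Nat.cast_nonneg N)
    · apply div_le_one_of_le₀
      · calc (∑ n ∈ Finset.range N, h n) ≤ ∑ n ∈ Finset.range N, 1 :=
              Finset.sum_le_sum (fun n _ =>
                norm_sq_diff_le_one (prod_muR_zero_or_one r _ _) (prod_muR_zero_or_one r _ _))
        _ = N := by simp
      · exact Nat.cast_nonneg N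
  obtain ⟨x, hx01, hxle⟩ := (isCompact_Icc (a := (0:ℝ)) (b := 1)).ultrafilter_le_nhds
      (Ultrafilter.map A ω)
      (by rw [Ultrafilter.coe_map, Filter.le_principal_iff, Filter.mem_map]
          exact Filter.univ_mem' fun N => hA01 N)
  rw [Ultrafilter.coe_map] at hxle
  have hxT : Filter.Tendsto A (ω : Filter ℕ) (nhds x) := hxle
  have hmean : meanAlong ω h = x := hxT.limUnder_eq
  have hmg : meanAlong ω h = meanAlong ω (fun n => ‖(∏ i ∈ Finset.Icc 1 s, muR r (n + L + m i))
      - ∏ i ∈ Finset.Icc 1 s, muR r (n + m i)‖ ^ 2) := rfl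
  rw [← hmg, hmean]
  set C : ℝ := 4 * s / (j + 1) with hC
  have hC0 : (0:ℝ) ≤ C := by positivity
  refine ⟨hx01.1, ?_⟩
  set st : ℕ → ℝ := fun N => ∑ i ∈ Finset.Icc 1 s,
      ((6:ℝ) + 2 * (Nat.sqrt (N + m i) : ℝ) + 2 * (Nat.sqrt (N + (L + m i)) : ℝ)) with hst
  have hsum_le : ∀ N, (∑ n ∈ Finset.range N, h n) ≤ N * C + st N := by
    intro N
    calc (∑ n ∈ Finset.range N, h n)
        ≤ ∑ n ∈ Finset.range N, ∑ i ∈ Finset.Icc 1 s,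
            ((if ∃ p, Nat.Prime p ∧ j < p ∧ p ^ r ∣ n + m i then (1:ℝ) else 0)
              + (if ∃ p, Nat.Prime p ∧ j < p ∧ p ^ r ∣ n + (L + m i) then (1:ℝ) else 0)) :=
          Finset.sum_le_sum fun n _ => pointwise_bound r s j m L hL n
      _ = ∑ i ∈ Finset.Icc 1 s, ∑ n ∈ Finset.range N,
            ((if ∃ p, Nat.Prime p ∧ j < p ∧ p ^ r ∣ n + m i then (1:ℝ) else 0)
              + (if ∃ p, Nat.Prime p ∧ j < p ∧ p ^ r ∣ n + (L + m i) then (1:ℝ) else 0)) :=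
          Finset.sum_comm
      _ = ∑ i ∈ Finset.Icc 1 s,
            ((∑ n ∈ Finset.range N, (if ∃ p, Nat.Prime p ∧ j < p ∧ p ^ r ∣ n + m i then (1:ℝ) else 0))
              + ∑ n ∈ Finset.range N, (if ∃ p, Nat.Prime p ∧ j < p ∧ p ^ r ∣ n + (L + m i) then (1:ℝ) else 0)) :=
          Finset.sum_congr rfl fun i _ => Finset.sum_add_distrib
      _ ≤ ∑ i ∈ Finset.Icc 1 s,
            (((N:ℝ) * (2/(j+1)) + (2 * Nat.sqrt (N + m i) + 3))
              + ((N:ℝ) * (2/(j+1)) + (2 * Nat.sqrt (N + (L + m i)) + 3))) :=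
          Finset.sum_le_sum fun i _ =>
            add_le_add (sum_ind_le r j (m i) N hr) (sum_ind_le r j (L + m i) N hr)
      _ = N * C + st N := by
          rw [hst, hC]
          rw [Finset.sum_add_distrib, ← Finset.sum_add_distrib]
          have hcard : (Finset.Icc 1 s).card = s := by
            rw [Nat.card_Icc]; omega
          rw [show (∑ i ∈ Finset.Icc 1 s,
              (((N:ℝ) * (2/(j+1)) + (2 * Nat.sqrt (N + m i) + 3))
                + ((N:ℝ) * (2/(j+1)) + (2 * Nat.sqrt (N + (L + m i)) + 3))))
            = ∑ i ∈ Finset.Icc 1 s, ((N:ℝ) * (4/(j+1))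
                + ((6:ℝ) + 2 * (Nat.sqrt (N + m i) : ℝ) + 2 * (Nat.sqrt (N + (L + m i)) : ℝ))) from
              Finset.sum_congr rfl fun i _ => by ring]
          rw [Finset.sum_add_distrib, Finset.sum_const, hcard, nsmul_eq_mul]
          ring
  have hAB : ∀ N, A N ≤ C + st N / N := by
    intro N
    rcases Nat.eq_zero_or_pos N with h0 | h0
    · subst h0
      have : A 0 = 0 := by simp [hAdef]
      rw [this]
      have : st 0 / ((0:ℕ):ℝ) = 0 := by simp
      rw [this, add_zero]
      exact hC0
    · have hN0 : (0:ℝ) < N := by exact_mod_cast h0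
      have heq2 : C + st N / N = (N * C + st N) / N := by
        field_simp
      rw [heq2]
      exact (div_le_div_iff_of_pos_right hN0).mpr (hsum_le N)
  have hterm : ∀ c : ℕ, Tendsto (fun N : ℕ =>
      ((6:ℝ) + 2 * (Nat.sqrt (N + c) : ℝ)) / N) atTop (nhds 0) := by
    intro c
    have h6 : Tendsto (fun N : ℕ => (6:ℝ)/N) atTop (nhds 0) :=
      tendsto_const_div_atTop_nhds_zero_nat 6
    have ha := (sqrt_div_tendsto c).const_mul (2:ℝ)
    have heq : (fun N : ℕ => ((6:ℝ) + 2 * (Nat.sqrt (N + c) : ℝ)) / N)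
        = fun N : ℕ => (6:ℝ)/N + 2 * ((Nat.sqrt (N + c) : ℝ)/N) := by
      funext N; ring
    rw [heq]
    simpa using h6.add ha
  have htermi : ∀ i : ℕ, Tendsto (fun N : ℕ =>
      ((6:ℝ) + 2 * (Nat.sqrt (N + m i) : ℝ) + 2 * (Nat.sqrt (N + (L + m i)) : ℝ)) / N)
      atTop (nhds 0) := by
    intro i
    have h6 : Tendsto (fun N : ℕ => (6:ℝ)/N) atTop (nhds 0) :=
      tendsto_const_div_atTop_nhds_zero_nat 6
    have ha := (sqrt_div_tendsto (m i)).const_mul (2:ℝ)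
    have hb := (sqrt_div_tendsto (L + m i)).const_mul (2:ℝ)
    have heq : (fun N : ℕ =>
        ((6:ℝ) + 2 * (Nat.sqrt (N + m i) : ℝ) + 2 * (Nat.sqrt (N + (L + m i)) : ℝ)) / N)
        = fun N : ℕ => ((6:ℝ)/N + 2 * ((Nat.sqrt (N + m i) : ℝ)/N))
            + 2 * ((Nat.sqrt (N + (L + m i)) : ℝ)/N) := by
      funext N; ring
    rw [heq]
    simpa using (h6.add ha).add hb
  have hzero : Tendsto (fun N : ℕ => st N / N) atTop (nhds 0) := by
    have heq : (fun N : ℕ => st N / N) = fun N : ℕ => ∑ i ∈ Finset.Icc 1 s,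
        ((6:ℝ) + 2 * (Nat.sqrt (N + m i) : ℝ) + 2 * (Nat.sqrt (N + (L + m i)) : ℝ)) / N := by
      funext N; rw [hst, Finset.sum_div]
    rw [heq]
    have := tendsto_finset_sum (Finset.Icc 1 s) (fun i _ => htermi i)
    simpa using this
  have hstT : Tendsto (fun N : ℕ => C + st N / N) atTop (nhds C) := by
    have := (tendsto_const_nhds (x := C) (f := atTop (α := ℕ))).add hzero
    simpa using this
  have hωatTop : (ω : Filter ℕ) ≤ atTop := by rwa [Nat.cofinite_eq_atTop] at hω
  have hstω : Tendsto (fun N : ℕ => C + st N / N) (ω : Filter ℕ) (nhds C) :=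
    hstT.mono_left hωatTop
  exact le_of_tendsto_of_tendsto' hxT hstω hAB

/-- Products of shifted `r`-th power-free indicator functions are
strongly asymptotically periodic. -/
theorem powerfree_products_stronglyAsymptoticallyPeriodic
    (r : ℕ) (hr : 2 ≤ r) (s : ℕ) (hs : 1 ≤ s) (m : ℕ → ℕ) :
    StronglyAsymptoticallyPeriodic
      (fun n => ∏ i ∈ Finset.Icc 1 s, muR r (n + m i)) := by
  intro ω hω
  refine ⟨fun j => (Nat.factorial (j+1))^r, fun j => pow_pos (Nat.factorial_pos _) r, ?_⟩
  have hLd : ∀ j l p, Nat.Prime p → p ≤ j → p ^ r ∣ l * ((Nat.factorial (j+1)))^r := by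
    intro j l p hp hpj
    exact Dvd.dvd.mul_left (pow_dvd_pow_of_dvd (Nat.dvd_factorial hp.pos (by omega)) r) l
  have hmb : ∀ j l : ℕ,
      meanAlong ω (fun n =>
        ‖(fun n => ∏ i ∈ Finset.Icc 1 s, muR r (n + m i)) (n + l * (Nat.factorial (j+1))^r)
          - (fun n => ∏ i ∈ Finset.Icc 1 s, muR r (n + m i)) n‖ ^ 2)
        ∈ Set.Icc (0:ℝ) (4 * s / (j + 1)) := by
    intro j l
    have := mean_bound r s hr m ω hω j (l * (Nat.factorial (j+1))^r) (hLd j l)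
    exact this
  apply squeeze_zero (g := fun j : ℕ => (4 * s : ℝ) / (j + 1))
  · intro j
    have hbdd : BddAbove (Set.range fun l : ℕ =>
        meanAlong ω (fun n =>
          ‖(fun n => ∏ i ∈ Finset.Icc 1 s, muR r (n + m i)) (n + l * (Nat.factorial (j+1))^r)
            - (fun n => ∏ i ∈ Finset.Icc 1 s, muR r (n + m i)) n‖ ^ 2)) := by
      refine ⟨4 * s / (j + 1), ?_⟩
      rintro _ ⟨l, rfl⟩
      exact (hmb j l).2
    exact le_trans (hmb j 0).1 (le_ciSup hbdd 0)
  · intro j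
    exact ciSup_le fun l => (hmb j l).2
  · have h1 : Tendsto (fun j : ℕ => ((j:ℝ) + 1)) atTop atTop :=
      tendsto_atTop_add_const_right _ 1 tendsto_natCast_atTop_atTop
    exact Tendsto.div_atTop tendsto_const_nhds h1
end

section
/- Let θ be an irrational real number and f : ℕ → ℂ the function f(n) = e^{2πi n² θ}. Then: (i) for all natural numbers l ≠ m, lim_{N→∞} (1/N)·∑_{n=1}^{N} f(n+l)·conj(f(n+m)) = 0; and (ii) for every nonprincipal ultrafilter ω on ℕ and every bounded asymptotically periodic function g : ℕ → ℂ, E_ω(n ↦ f(n)·conj(g(n))) = 0. -/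
open Filter Finset

/-- A bounded function `f : ℕ → ℂ` is asymptotically periodic if for every
nonprincipal ultrafilter `ω` on `ℕ` there is a sequence `(n_j)` of positive integers
such that `E_ω(|f(·+n_j) − f|²) → 0` as `j → ∞`. -/
def AsymptoticallyPeriodic (f : ℕ → ℂ) : Prop :=
  ∀ ω : Ultrafilter ℕ, (ω : Filter ℕ) ≤ Filter.cofinite →
    ∃ nj : ℕ → ℕ, (∀ j, 0 < nj j) ∧
      Filter.Tendsto (fun j => meanAlong ω (fun n => ‖f (n + nj j) - f n‖ ^ 2))
        Filter.atTop (nhds 0)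

/-- The function `n ↦ e^{2πi n² θ}`. -/
noncomputable def quadExp (θ : ℝ) (n : ℕ) : ℂ :=
  Complex.exp (2 * Real.pi * Complex.I * (n : ℂ) ^ 2 * (θ : ℂ))

/- ### Auxiliary lemmas -/

lemma norm_quadExp (θ : ℝ) (n : ℕ) : ‖quadExp θ n‖ = 1 := by
  have : quadExp θ n = Complex.exp (((2 * Real.pi * (n:ℝ)^2 * θ : ℝ) : ℂ) * Complex.I) := by
    unfold quadExp; congr 1; push_cast; ring
  rw [this]
  exact Complex.norm_exp_ofReal_mul_I _

lemma quadExp_mul_conj (θ : ℝ) (a b n : ℕ) :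
    quadExp θ (n + a) * (starRingEnd ℂ) (quadExp θ (n + b)) =
      Complex.exp (((2*Real.pi*((a:ℝ)^2-(b:ℝ)^2)*θ : ℝ) : ℂ) * Complex.I) *
        Complex.exp (((2*Real.pi*(2*((a:ℝ)-(b:ℝ)))*θ : ℝ) : ℂ) * Complex.I) ^ n := by
  unfold quadExp
  rw [← Complex.exp_conj, ← Complex.exp_nat_mul, ← Complex.exp_add, ← Complex.exp_add]
  congr 1
  have h1 : (starRingEnd ℂ) (2 * ↑Real.pi * Complex.I * ((n + b : ℕ) : ℂ) ^ 2 * (θ:ℂ)) =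
      -(2 * ↑Real.pi * Complex.I * ((n + b : ℕ) : ℂ) ^ 2 * (θ:ℂ)) := by
    simp [map_mul, map_pow, Complex.conj_I, Complex.conj_ofReal, Complex.conj_natCast, map_ofNat]
  rw [h1]
  push_cast
  ring

lemma char_ne_one {θ : ℝ} (hθ : Irrational θ) {a b : ℕ} (hab : a ≠ b) :
    Complex.exp (((2*Real.pi*(2*((a:ℝ)-(b:ℝ)))*θ : ℝ) : ℂ) * Complex.I) ≠ 1 := by
  intro h
  obtain ⟨k, hk⟩ := Complex.exp_eq_one_iff.mp h
  have hI : ((2*Real.pi*(2*((a:ℝ)-(b:ℝ)))*θ : ℝ) : ℂ) = ((2*Real.pi*(k:ℝ) : ℝ) : ℂ) := by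
    have h2 : ((2*Real.pi*(2*((a:ℝ)-(b:ℝ)))*θ : ℝ) : ℂ) * Complex.I
        = ((2*Real.pi*(k:ℝ) : ℝ) : ℂ) * Complex.I := by
      rw [hk]; push_cast; ring
    exact mul_right_cancel₀ Complex.I_ne_zero h2
  have hR : 2*Real.pi*(2*((a:ℝ)-(b:ℝ)))*θ = 2*Real.pi*(k:ℝ) := by exact_mod_cast hI
  have hab' : (2*((a:ℝ)-(b:ℝ))) ≠ 0 := by
    have : (a:ℝ) ≠ (b:ℝ) := by exact_mod_cast hab
    intro h0; apply this; linarith [h0]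
  have hθeq : θ = (k:ℝ) / (2*((a:ℝ)-(b:ℝ))) := by
    have h2pi : (2*Real.pi) ≠ 0 := by positivity
    have h3 : (2*((a:ℝ)-(b:ℝ)))*θ = (k:ℝ) := by
      apply mul_left_cancel₀ h2pi
      linear_combination hR
    rw [eq_div_iff hab']
    linear_combination h3
  refine hθ ⟨(k:ℚ) / (2*((a:ℚ)-(b:ℚ))), ?_⟩
  rw [hθeq]; push_cast; ring

lemma geom_cesaro (z w : ℂ) (hz1 : ‖z‖ = 1) (hz : z ≠ 1) :
    Tendsto (fun N : ℕ => (∑ n ∈ range N, w * z ^ n) / (N : ℂ)) atTop (nhds 0) := by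
  apply squeeze_zero_norm (a := fun N : ℕ => (‖w‖ * (2 / ‖z - 1‖)) / N)
  · intro N
    rw [← Finset.mul_sum, geom_sum_eq hz]
    calc ‖w * ((z ^ N - 1) / (z - 1)) / (N : ℂ)‖
        = ‖w‖ * (‖z ^ N - 1‖ / ‖z - 1‖) / (N : ℝ) := by
          simp [norm_mul, norm_div]
      _ ≤ ‖w‖ * (2 / ‖z - 1‖) / (N : ℝ) := by
          gcongr
          calc ‖z ^ N - 1‖ ≤ ‖z ^ N‖ + ‖(1:ℂ)‖ := norm_sub_le _ _
            _ = 2 := by simp [norm_pow, hz1]; norm_num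
  · exact tendsto_const_div_atTop_nhds_zero_nat _

lemma norm_exp_I (r : ℝ) : ‖Complex.exp ((r : ℂ) * Complex.I)‖ = 1 := by
  exact Complex.norm_exp_ofReal_mul_I r

lemma char_cesaro_range (θ : ℝ) (hθ : Irrational θ) {a b : ℕ} (hab : a ≠ b) :
    Tendsto (fun N : ℕ =>
      (∑ n ∈ range N, quadExp θ (n + a) * (starRingEnd ℂ) (quadExp θ (n + b))) / (N : ℂ))
      atTop (nhds 0) := by
  have h := geom_cesaro _ (Complex.exp (((2*Real.pi*((a:ℝ)^2-(b:ℝ)^2)*θ : ℝ) : ℂ) * Complex.I))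
    (norm_exp_I _) (char_ne_one hθ hab)
  refine h.congr fun N => ?_
  congr 1
  exact sum_congr rfl fun n _ => (quadExp_mul_conj θ a b n).symm

lemma char_cesaro_Icc (θ : ℝ) (hθ : Irrational θ) {a b : ℕ} (hab : a ≠ b) :
    Tendsto (fun N : ℕ => (1 / (N : ℂ)) * ∑ n ∈ Icc 1 N,
      quadExp θ (n + a) * (starRingEnd ℂ) (quadExp θ (n + b))) atTop (nhds 0) := by
  set z := Complex.exp (((2*Real.pi*(2*((a:ℝ)-(b:ℝ)))*θ : ℝ) : ℂ) * Complex.I) with hzdef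
  set w := Complex.exp (((2*Real.pi*((a:ℝ)^2-(b:ℝ)^2)*θ : ℝ) : ℂ) * Complex.I) with hwdef
  have h := geom_cesaro z (w * z) (norm_exp_I _) (char_ne_one hθ hab)
  refine h.congr fun N => ?_
  rw [one_div, inv_mul_eq_div]
  congr 1
  rw [← Finset.Ico_add_one_right_eq_Icc, Finset.sum_Ico_eq_sum_range]
  simp only [Nat.add_sub_cancel]
  refine sum_congr rfl fun n _ => ?_
  rw [quadExp_mul_conj θ a b (1 + n), ← hzdef, ← hwdef, pow_add, pow_one]
  ring

section Mean
variable {𝕜 : Type*} [RCLike 𝕜]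

lemma cesaro_bound (h : ℕ → 𝕜) (C : ℝ) (hC : ∀ n, ‖h n‖ ≤ C) (N : ℕ) :
    ‖(∑ n ∈ range N, h n) / (N : 𝕜)‖ ≤ C := by
  have hC0 : 0 ≤ C := (norm_nonneg _).trans (hC 0)
  rcases Nat.eq_zero_or_pos N with rfl | hN
  · simpa using hC0
  · rw [norm_div, RCLike.norm_natCast]
    rw [div_le_iff₀ (by exact_mod_cast hN)]
    calc ‖∑ n ∈ range N, h n‖ ≤ ∑ n ∈ range N, C :=
          norm_sum_le_of_le _ (fun n _ => hC n)
      _ = C * N := by simp [mul_comm]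

lemma exists_tendsto_cesaro (ω : Ultrafilter ℕ) (h : ℕ → 𝕜) (C : ℝ) (hC : ∀ n, ‖h n‖ ≤ C) :
    ∃ c : 𝕜, Tendsto (fun N : ℕ => (∑ n ∈ range N, h n) / (N : 𝕜)) (ω : Filter ℕ) (nhds c) := by
  obtain ⟨c, -, hc⟩ := (ProperSpace.isCompact_closedBall (0 : 𝕜) C).ultrafilter_le_nhds
    (ω.map (fun N : ℕ => (∑ n ∈ range N, h n) / (N : 𝕜)))
    (le_principal_iff.mpr (mem_map.mpr (univ_mem' (fun N => by
      simpa [Metric.mem_closedBall, dist_zero_right] using cesaro_bound h C hC N))))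
  exact ⟨c, hc⟩

lemma tendsto_meanAlong (ω : Ultrafilter ℕ) (h : ℕ → ℝ) (C : ℝ) (hC : ∀ n, ‖h n‖ ≤ C) :
    Tendsto (fun N : ℕ => (∑ n ∈ range N, h n) / (N : ℝ)) (ω : Filter ℕ)
      (nhds (meanAlong ω h)) := by
  obtain ⟨c, hc⟩ := exists_tendsto_cesaro ω h C hC
  rwa [meanAlong, hc.limUnder_eq]

lemma sum_shift_bound {E : Type*} [SeminormedAddCommGroup E] (h : ℕ → E) (C : ℝ)
    (hC : ∀ n, ‖h n‖ ≤ C) (k N : ℕ) (hkN : k ≤ N) :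
    ‖(∑ n ∈ range N, h (n + k)) - ∑ n ∈ range N, h n‖ ≤ 2 * k * C := by
  have e1 : ∑ n ∈ range N, h (n + k) = ∑ n ∈ Ico k (N + k), h n := by
    rw [Finset.sum_Ico_eq_sum_range]
    simp [add_comm k]
  have e2 : ∑ n ∈ Ico k N, h n + ∑ n ∈ Ico N (N + k), h n = ∑ n ∈ Ico k (N + k), h n :=
    Finset.sum_Ico_consecutive _ hkN (Nat.le_add_right N k)
  have e3 : ∑ n ∈ Ico 0 k, h n + ∑ n ∈ Ico k N, h n = ∑ n ∈ Ico 0 N, h n :=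
    Finset.sum_Ico_consecutive _ (Nat.zero_le k) hkN
  have e4 : ∑ n ∈ range N, h n = ∑ n ∈ Ico 0 N, h n := by
    rw [Finset.range_eq_Ico]
  have key : (∑ n ∈ range N, h (n + k)) - ∑ n ∈ range N, h n
      = (∑ n ∈ Ico N (N + k), h n) - ∑ n ∈ Ico 0 k, h n := by
    rw [e1, e4, ← e2, ← e3]; abel
  rw [key]
  have b1 : ‖∑ n ∈ Ico N (N + k), h n‖ ≤ k * C := by
    calc ‖∑ n ∈ Ico N (N + k), h n‖ ≤ ∑ n ∈ Ico N (N + k), C :=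
          norm_sum_le_of_le _ (fun n _ => hC n)
      _ = k * C := by simp [Nat.add_sub_cancel_left, mul_comm]
  have b2 : ‖∑ n ∈ Ico 0 k, h n‖ ≤ k * C := by
    calc ‖∑ n ∈ Ico 0 k, h n‖ ≤ ∑ n ∈ Ico 0 k, C :=
          norm_sum_le_of_le _ (fun n _ => hC n)
      _ = k * C := by simp [mul_comm]
  calc ‖(∑ n ∈ Ico N (N + k), h n) - ∑ n ∈ Ico 0 k, h n‖
      ≤ ‖∑ n ∈ Ico N (N + k), h n‖ + ‖∑ n ∈ Ico 0 k, h n‖ := norm_sub_le _ _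
    _ ≤ k * C + k * C := add_le_add b1 b2
    _ = 2 * k * C := by ring

lemma cesaro_shift (ω : Ultrafilter ℕ) (hω : (ω : Filter ℕ) ≤ Filter.cofinite)
    (h : ℕ → 𝕜) (C : ℝ) (hC : ∀ n, ‖h n‖ ≤ C) (k : ℕ) :
    Tendsto (fun N : ℕ => (∑ n ∈ range N, h (n + k)) / (N : 𝕜)
      - (∑ n ∈ range N, h n) / (N : 𝕜)) (ω : Filter ℕ) (nhds 0) := by
  have hωtop : (ω : Filter ℕ) ≤ atTop := by rw [← Nat.cofinite_eq_atTop]; exact hω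
  refine Tendsto.mono_left ?_ hωtop
  apply squeeze_zero_norm' (a := fun N : ℕ => (2 * k * C) / N)
  · filter_upwards [eventually_ge_atTop k] with N hN
    rw [div_sub_div_same, norm_div, RCLike.norm_natCast]
    gcongr
    exact sum_shift_bound h C hC k N hN
  · exact tendsto_const_div_atTop_nhds_zero_nat _

end Mean

lemma cs_sum_mul (u v : ℕ → ℝ) (hu : ∀ n, 0 ≤ u n) (hv : ∀ n, 0 ≤ v n) (N : ℕ) :
    ∑ n ∈ range N, u n * v n ≤
      Real.sqrt (∑ n ∈ range N, u n ^ 2) * Real.sqrt (∑ n ∈ range N, v n ^ 2) := by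
  rw [← Real.sqrt_mul (by positivity)]
  rw [Real.le_sqrt (Finset.sum_nonneg fun n _ => mul_nonneg (hu n) (hv n)) (by positivity)]
  exact Finset.sum_mul_sq_le_sq_mul_sq _ _ _

lemma avg_le_sqrt_avg_sq (u : ℕ → ℝ) (hu : ∀ n, 0 ≤ u n) (N : ℕ) :
    (∑ n ∈ range N, u n) / N ≤ Real.sqrt ((∑ n ∈ range N, u n ^ 2) / N) := by
  rcases Nat.eq_zero_or_pos N with rfl | hN
  · simp
  have hN' : (0:ℝ) < N := by exact_mod_cast hN
  rw [Real.le_sqrt (div_nonneg (Finset.sum_nonneg fun n _ => hu n) hN'.le) (by positivity)]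
  rw [div_pow]
  rw [div_le_div_iff₀ (by positivity) hN']
  have h := sq_sum_le_card_mul_sum_sq (s := range N) (f := u)
  simp only [card_range] at h
  calc (∑ n ∈ range N, u n) ^ 2 * N ≤ ((N:ℝ) * ∑ n ∈ range N, u n ^ 2) * N := by
        gcongr
    _ = (∑ n ∈ range N, u n ^ 2) * (N:ℝ)^2 := by ring

lemma sqrt_avg_sq_add (u v : ℕ → ℝ) (hu : ∀ n, 0 ≤ u n) (hv : ∀ n, 0 ≤ v n) (N : ℕ) :
    Real.sqrt ((∑ n ∈ range N, (u n + v n) ^ 2) / N) ≤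
      Real.sqrt ((∑ n ∈ range N, u n ^ 2) / N) + Real.sqrt ((∑ n ∈ range N, v n ^ 2) / N) := by
  rcases Nat.eq_zero_or_pos N with rfl | hN
  · simp
  have hN' : (0:ℝ) < N := by exact_mod_cast hN
  have key : Real.sqrt (∑ n ∈ range N, (u n + v n) ^ 2) ≤
      Real.sqrt (∑ n ∈ range N, u n ^ 2) + Real.sqrt (∑ n ∈ range N, v n ^ 2) := by
    have h1 : ∑ n ∈ range N, (u n + v n) ^ 2
        = ∑ n ∈ range N, u n ^ 2 + 2 * ∑ n ∈ range N, u n * v n + ∑ n ∈ range N, v n ^ 2 := by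
      rw [Finset.mul_sum, ← Finset.sum_add_distrib, ← Finset.sum_add_distrib]
      exact Finset.sum_congr rfl fun n _ => by ring
    have h2 := cs_sum_mul u v hu hv N
    have h3 : ∑ n ∈ range N, (u n + v n) ^ 2 ≤
        (Real.sqrt (∑ n ∈ range N, u n ^ 2) + Real.sqrt (∑ n ∈ range N, v n ^ 2)) ^ 2 := by
      rw [h1, add_sq]
      rw [Real.sq_sqrt (by positivity), Real.sq_sqrt (by positivity)]
      nlinarith [h2]
    calc Real.sqrt (∑ n ∈ range N, (u n + v n) ^ 2)
        ≤ Real.sqrt ((Real.sqrt (∑ n ∈ range N, u n ^ 2) + Real.sqrt (∑ n ∈ range N, v n ^ 2)) ^ 2) :=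
          Real.sqrt_le_sqrt h3
      _ = _ := Real.sqrt_sq (by positivity)
  rw [Real.sqrt_div (by positivity), Real.sqrt_div (by positivity), Real.sqrt_div (by positivity),
    ← add_div]
  gcongr

/-- For `θ` irrational and `f(n) = e^{2πi n² θ}`:
(i) the shifts of `f` are pairwise orthogonal in mean;
(ii) `f` is orthogonal to every bounded asymptotically periodic function. -/
theorem quadExp_orthogonal_asymptoticallyPeriodic (θ : ℝ) (hθ : Irrational θ) :
    (∀ l m : ℕ, l ≠ m → Filter.Tendsto (fun N : ℕ =>
        (1 / (N : ℂ)) * ∑ n ∈ Finset.Icc 1 N,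
          quadExp θ (n + l) * (starRingEnd ℂ) (quadExp θ (n + m)))
      Filter.atTop (nhds 0))
    ∧ (∀ ω : Ultrafilter ℕ, (ω : Filter ℕ) ≤ Filter.cofinite →
        ∀ g : ℕ → ℂ, (∃ C : ℝ, ∀ n, ‖g n‖ ≤ C) → AsymptoticallyPeriodic g →
          Filter.Tendsto (fun N : ℕ =>
              (1 / (N : ℂ)) * ∑ n ∈ Finset.range N,
                quadExp θ n * (starRingEnd ℂ) (g n))
            (ω : Filter ℕ) (nhds 0)) := by
  constructor
  · intro l m hlm
    exact char_cesaro_Icc θ hθ hlm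
  intro ω hω g hgB hap
  obtain ⟨C, hgC⟩ := hgB
  haveI : (ω : Filter ℕ).NeBot := ω.neBot
  have hωtop : (ω : Filter ℕ) ≤ atTop := by rw [← Nat.cofinite_eq_atTop]; exact hω
  have hC0 : 0 ≤ C := (norm_nonneg _).trans (hgC 0)
  obtain ⟨nj, hnjpos, hnj⟩ := hap ω hω
  have hfg_bd : ∀ a n : ℕ, ‖quadExp θ (n + a) * (starRingEnd ℂ) (g n)‖ ≤ C := by
    intro a n
    rw [norm_mul, norm_quadExp, one_mul, RCLike.norm_conj]
    exact hgC n
  have hfg0_bd : ∀ n : ℕ, ‖quadExp θ n * (starRingEnd ℂ) (g n)‖ ≤ C := by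
    intro n
    rw [norm_mul, norm_quadExp, one_mul, RCLike.norm_conj]
    exact hgC n
  obtain ⟨c, hc⟩ := exists_tendsto_cesaro ω (fun n => quadExp θ n * (starRingEnd ℂ) (g n)) C hfg0_bd
  suffices hc0 : c = 0 by
    rw [← hc0]
    refine hc.congr fun N => ?_
    rw [one_div, inv_mul_eq_div]
  -- limits d a of shifted averages
  have hdex : ∀ a : ℕ, ∃ da : ℂ, Tendsto (fun N : ℕ =>
      (∑ n ∈ range N, quadExp θ (n + a) * (starRingEnd ℂ) (g n)) / (N:ℂ))
      (ω : Filter ℕ) (nhds da) :=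
    fun a => exists_tendsto_cesaro ω _ C (hfg_bd a)
  choose d hdt using hdex
  -- means e a
  set e : ℕ → ℝ := fun a => meanAlong ω (fun n => ‖g (n + a) - g n‖ ^ 2) with hedef
  have hgsq_bd : ∀ (a n : ℕ), ‖‖g (n + a) - g n‖ ^ 2‖ ≤ (2*C)^2 := by
    intro a n
    rw [Real.norm_eq_abs, abs_of_nonneg (by positivity)]
    have : ‖g (n + a) - g n‖ ≤ 2 * C := by
      calc ‖g (n + a) - g n‖ ≤ ‖g (n + a)‖ + ‖g n‖ := norm_sub_le _ _
        _ ≤ C + C := add_le_add (hgC _) (hgC _)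
        _ = 2 * C := by ring
    exact pow_le_pow_left₀ (norm_nonneg _) this 2
  have het : ∀ a : ℕ, Tendsto (fun N : ℕ => (∑ n ∈ range N, ‖g (n + a) - g n‖ ^ 2) / (N:ℝ))
      (ω : Filter ℕ) (nhds (e a)) :=
    fun a => tendsto_meanAlong ω _ ((2*C)^2) (hgsq_bd a)
  have he0 : ∀ a, 0 ≤ e a := fun a => ge_of_tendsto' (het a) (fun N => by positivity)
  -- shift invariance of the limit c
  have hshift : ∀ a : ℕ, Tendsto (fun N : ℕ =>
      (∑ n ∈ range N, quadExp θ (n + a) * (starRingEnd ℂ) (g (n + a))) / (N:ℂ))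
      (ω : Filter ℕ) (nhds c) := by
    intro a
    have h0 := cesaro_shift ω hω (fun n => quadExp θ n * (starRingEnd ℂ) (g n)) C hfg0_bd a
    have h1 := h0.add hc
    simpa using h1
  -- claim 1
  have claim1 : ∀ a : ℕ, ‖c - d a‖ ≤ Real.sqrt (e a) := by
    intro a
    have hX : Tendsto (fun N : ℕ =>
        (∑ n ∈ range N, quadExp θ (n + a) * (starRingEnd ℂ) (g (n + a))) / (N:ℂ)
        - (∑ n ∈ range N, quadExp θ (n + a) * (starRingEnd ℂ) (g n)) / (N:ℂ))
        (ω : Filter ℕ) (nhds (c - d a)) := (hshift a).sub (hdt a)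
    have hY : Tendsto (fun N : ℕ =>
        Real.sqrt ((∑ n ∈ range N, ‖g (n + a) - g n‖ ^ 2) / (N:ℝ))) (ω : Filter ℕ)
        (nhds (Real.sqrt (e a))) := (Real.continuous_sqrt.tendsto _).comp (het a)
    refine le_of_tendsto_of_tendsto' hX.norm hY fun N => ?_
    refine le_trans ?_ (avg_le_sqrt_avg_sq (fun n => ‖g (n + a) - g n‖)
      (fun n => norm_nonneg _) N)
    rw [div_sub_div_same, ← Finset.sum_sub_distrib, norm_div, Complex.norm_natCast]
    gcongr
    refine norm_sum_le_of_le _ fun n _ => ?_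
    rw [← mul_sub, norm_mul, norm_quadExp, one_mul, ← map_sub, RCLike.norm_conj]
  -- diagonal averages tend to 1
  have hdiag : ∀ a : ℕ, Tendsto (fun N : ℕ =>
      (∑ n ∈ range N, quadExp θ (n + a) * (starRingEnd ℂ) (quadExp θ (n + a))) / (N:ℂ))
      (ω : Filter ℕ) (nhds 1) := by
    intro a
    have hev : ∀ᶠ N in (ω : Filter ℕ),
        (∑ n ∈ range N, quadExp θ (n + a) * (starRingEnd ℂ) (quadExp θ (n + a))) / (N:ℂ) = 1 := by
      filter_upwards [(eventually_ge_atTop 1).filter_mono hωtop] with N hN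
      have hone : ∀ n : ℕ, quadExp θ (n + a) * (starRingEnd ℂ) (quadExp θ (n + a)) = 1 := by
        intro n
        rw [Complex.mul_conj, Complex.normSq_eq_norm_sq, norm_quadExp]
        norm_num
      simp only [hone, Finset.sum_const, card_range, nsmul_eq_mul, mul_one]
      have hNne : (N:ℂ) ≠ 0 := Nat.cast_ne_zero.mpr (by omega)
      field_simp
    exact (tendsto_congr' hev).mpr tendsto_const_nhds
  -- claim 2 : subadditivity of sqrt ∘ e
  have claim2 : ∀ x y : ℕ, Real.sqrt (e (x + y)) ≤ Real.sqrt (e x) + Real.sqrt (e y) := by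
    intro x y
    have hshiftx : Tendsto (fun N : ℕ =>
        (∑ n ∈ range N, ‖g (n + y + x) - g (n + y)‖ ^ 2) / (N:ℝ)) (ω : Filter ℕ)
        (nhds (e x)) := by
      have h0 := cesaro_shift ω hω (fun n => ‖g (n + x) - g n‖ ^ 2) ((2*C)^2) (hgsq_bd x) y
      have h1 := h0.add (het x)
      simpa using h1
    have hLHS : Tendsto (fun N : ℕ =>
        Real.sqrt ((∑ n ∈ range N, ‖g (n + (x + y)) - g n‖ ^ 2) / (N:ℝ))) (ω : Filter ℕ)
        (nhds (Real.sqrt (e (x + y)))) := (Real.continuous_sqrt.tendsto _).comp (het (x + y))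
    have hRHS : Tendsto (fun N : ℕ =>
        Real.sqrt ((∑ n ∈ range N, ‖g (n + y + x) - g (n + y)‖ ^ 2) / (N:ℝ))
        + Real.sqrt ((∑ n ∈ range N, ‖g (n + y) - g n‖ ^ 2) / (N:ℝ))) (ω : Filter ℕ)
        (nhds (Real.sqrt (e x) + Real.sqrt (e y))) :=
      ((Real.continuous_sqrt.tendsto _).comp hshiftx).add
        ((Real.continuous_sqrt.tendsto _).comp (het y))
    refine le_of_tendsto_of_tendsto' hLHS hRHS fun N => ?_
    refine le_trans (Real.sqrt_le_sqrt ?_) (sqrt_avg_sq_add (fun n => ‖g (n + y + x) - g (n + y)‖)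
      (fun n => ‖g (n + y) - g n‖) (fun n => norm_nonneg _) (fun n => norm_nonneg _) N)
    gcongr with n hn
    have harg : n + (x + y) = n + y + x := by ring
    rw [harg, ← sub_add_sub_cancel (g (n + y + x)) (g (n + y)) (g n)]
    exact norm_add_le _ _
  -- claim 3
  have claim3 : ∀ J : ℕ, 0 < J → ∀ a : ℕ, 0 < a →
      ‖(∑ k ∈ range J, d ((k + 1) * a)) / (J:ℂ)‖ ≤ C * Real.sqrt (1 / (J:ℝ)) := by
    intro J hJ a ha
    set F : ℕ → ℂ := fun n => (∑ k ∈ range J, quadExp θ (n + (k + 1) * a)) / (J:ℂ) with hFdef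
    have hJC : (J:ℂ) ≠ 0 := Nat.cast_ne_zero.mpr hJ.ne'
    have hJR : (0:ℝ) < J := by exact_mod_cast hJ
    have hP : Tendsto (fun N : ℕ => (∑ n ∈ range N, F n * (starRingEnd ℂ) (g n)) / (N:ℂ))
        (ω : Filter ℕ) (nhds ((∑ k ∈ range J, d ((k + 1) * a)) / (J:ℂ))) := by
      have heq : ∀ N : ℕ, (∑ n ∈ range N, F n * (starRingEnd ℂ) (g n)) / (N:ℂ)
          = (∑ k ∈ range J, (∑ n ∈ range N,
              quadExp θ (n + (k + 1) * a) * (starRingEnd ℂ) (g n)) / (N:ℂ)) / (J:ℂ) := by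
        intro N
        have hL : ∑ n ∈ range N, F n * (starRingEnd ℂ) (g n)
            = (∑ n ∈ range N, ∑ k ∈ range J,
                quadExp θ (n + (k + 1) * a) * (starRingEnd ℂ) (g n)) / (J:ℂ) := by
          rw [Finset.sum_div]
          refine Finset.sum_congr rfl fun n _ => ?_
          rw [hFdef, div_mul_eq_mul_div, Finset.sum_mul]
        rw [hL, Finset.sum_comm]
        simp only [← Finset.sum_div]
        rw [div_div, div_div, mul_comm (J:ℂ) (N:ℂ)]
      refine (Tendsto.div_const ?_ (J:ℂ)).congr fun N => (heq N).symm
      exact tendsto_finset_sum _ fun k _ => hdt ((k + 1) * a)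
    have hQc : Tendsto (fun N : ℕ => (∑ n ∈ range N, F n * (starRingEnd ℂ) (F n)) / (N:ℂ))
        (ω : Filter ℕ) (nhds (((1:ℝ)/(J:ℝ) : ℝ) : ℂ)) := by
      have heq2 : ∀ N : ℕ, (∑ n ∈ range N, F n * (starRingEnd ℂ) (F n)) / (N:ℂ)
          = (∑ j ∈ range J, ∑ k ∈ range J, (∑ n ∈ range N,
              quadExp θ (n + (j + 1) * a) * (starRingEnd ℂ) (quadExp θ (n + (k + 1) * a)))
                / (N:ℂ)) / ((J:ℂ) * (J:ℂ)) := by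
        intro N
        have hL : ∀ n : ℕ, F n * (starRingEnd ℂ) (F n)
            = (∑ j ∈ range J, ∑ k ∈ range J,
                quadExp θ (n + (j + 1) * a) * (starRingEnd ℂ) (quadExp θ (n + (k + 1) * a)))
              / ((J:ℂ) * (J:ℂ)) := by
          intro n
          rw [hFdef]
          rw [map_div₀, map_sum, Complex.conj_natCast, div_mul_div_comm, Finset.sum_mul_sum]
        simp only [hL]
        simp only [← Finset.sum_div]
        have hswap : (∑ n ∈ range N, ∑ j ∈ range J, ∑ k ∈ range J,
            quadExp θ (n + (j + 1) * a) * (starRingEnd ℂ) (quadExp θ (n + (k + 1) * a)))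
            = ∑ j ∈ range J, ∑ k ∈ range J, ∑ n ∈ range N,
            quadExp θ (n + (j + 1) * a) * (starRingEnd ℂ) (quadExp θ (n + (k + 1) * a)) := by
          rw [Finset.sum_comm]
          exact Finset.sum_congr rfl fun j _ => Finset.sum_comm
        rw [hswap, div_div, div_div, mul_comm ((J:ℂ) * (J:ℂ)) (N:ℂ)]
      have hlim : Tendsto (fun N : ℕ => ∑ j ∈ range J, ∑ k ∈ range J, (∑ n ∈ range N,
          quadExp θ (n + (j + 1) * a) * (starRingEnd ℂ) (quadExp θ (n + (k + 1) * a)))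
            / (N:ℂ)) (ω : Filter ℕ)
          (nhds (∑ j ∈ range J, ∑ k ∈ range J, if j = k then (1:ℂ) else 0)) := by
        refine tendsto_finset_sum _ fun j _ => tendsto_finset_sum _ fun k _ => ?_
        by_cases hjk : j = k
        · subst hjk
          simp only [if_pos rfl]
          exact hdiag ((j + 1) * a)
        · simp only [if_neg hjk]
          have hne : (j + 1) * a ≠ (k + 1) * a := by
            intro hcon
            apply hjk
            have := Nat.eq_of_mul_eq_mul_right ha hcon
            omega
          exact (char_cesaro_range θ hθ hne).mono_left hωtop
      have hval : (∑ j ∈ range J, ∑ k ∈ range J, if j = k then (1:ℂ) else 0) = (J:ℂ) := by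
        have : ∀ j ∈ range J, (∑ k ∈ range J, if j = k then (1:ℂ) else 0) = 1 := by
          intro j hj
          rw [Finset.sum_ite_eq]
          simp [hj]
        rw [Finset.sum_congr rfl this]
        simp
      have h6 : (((1:ℝ)/(J:ℝ) : ℝ) : ℂ) = (∑ j ∈ range J, ∑ k ∈ range J,
          if j = k then (1:ℂ) else 0) / ((J:ℂ) * (J:ℂ)) := by
        rw [hval]
        push_cast
        field_simp
      rw [h6]
      exact (hlim.div_const _).congr fun N => (heq2 N).symm
    have hQr : Tendsto (fun N : ℕ => (∑ n ∈ range N, Complex.normSq (F n)) / (N:ℝ))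
        (ω : Filter ℕ) (nhds ((1:ℝ)/(J:ℝ))) := by
      have hcast : ∀ N : ℕ, (((∑ n ∈ range N, Complex.normSq (F n)) / (N:ℝ) : ℝ) : ℂ)
          = (∑ n ∈ range N, F n * (starRingEnd ℂ) (F n)) / (N:ℂ) := by
        intro N
        rw [Complex.ofReal_div]
        congr 1
        · rw [Complex.ofReal_sum]
          exact Finset.sum_congr rfl fun n _ => (Complex.mul_conj (F n)).symm
      have h2 : Tendsto (fun N : ℕ =>
          (((∑ n ∈ range N, Complex.normSq (F n)) / (N:ℝ) : ℝ) : ℂ)) (ω : Filter ℕ)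
          (nhds (((1:ℝ)/(J:ℝ) : ℝ) : ℂ)) := hQc.congr fun N => (hcast N).symm
      have h3 := (Complex.continuous_re.tendsto _).comp h2
      simpa only [Function.comp_def, Complex.ofReal_re] using h3
    have hsqrt : Tendsto (fun N : ℕ =>
        C * Real.sqrt ((∑ n ∈ range N, Complex.normSq (F n)) / (N:ℝ))) (ω : Filter ℕ)
        (nhds (C * Real.sqrt (1/(J:ℝ)))) :=
      tendsto_const_nhds.mul ((Real.continuous_sqrt.tendsto _).comp hQr)
    refine le_of_tendsto_of_tendsto' hP.norm hsqrt fun N => ?_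
    have step1 : ‖(∑ n ∈ range N, F n * (starRingEnd ℂ) (g n)) / (N:ℂ)‖
        ≤ (∑ n ∈ range N, ‖F n‖ * C) / (N:ℝ) := by
      rw [norm_div, Complex.norm_natCast]
      gcongr
      refine norm_sum_le_of_le _ fun n _ => ?_
      rw [norm_mul, RCLike.norm_conj]
      exact mul_le_mul_of_nonneg_left (hgC n) (norm_nonneg _)
    refine step1.trans ?_
    have hfac : (∑ n ∈ range N, ‖F n‖ * C) / (N:ℝ) = C * ((∑ n ∈ range N, ‖F n‖) / (N:ℝ)) := by
      rw [← Finset.sum_mul]; ring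
    rw [hfac]
    have h4 := avg_le_sqrt_avg_sq (fun n => ‖F n‖) (fun n => norm_nonneg _) N
    have h5 : (∑ n ∈ range N, ‖F n‖ ^ 2) = ∑ n ∈ range N, Complex.normSq (F n) := by
      refine Finset.sum_congr rfl fun n _ => ?_
      rw [Complex.sq_norm]
    calc C * ((∑ n ∈ range N, ‖F n‖) / (N:ℝ))
        ≤ C * Real.sqrt ((∑ n ∈ range N, ‖F n‖ ^ 2) / (N:ℝ)) :=
          mul_le_mul_of_nonneg_left h4 hC0
      _ = C * Real.sqrt ((∑ n ∈ range N, Complex.normSq (F n)) / (N:ℝ)) := by rw [h5]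
  -- final epsilon argument
  have key : ∀ ε : ℝ, 0 < ε → ‖c‖ ≤ 2 * ε := by
    intro ε hε
    set J : ℕ := ⌈C^2/ε^2⌉₊ + 1 with hJdef
    have hJpos : 0 < J := Nat.succ_pos _
    have hJR : (0:ℝ) < J := by exact_mod_cast hJpos
    have hJC : (J:ℂ) ≠ 0 := Nat.cast_ne_zero.mpr hJpos.ne'
    have hCJ : C * Real.sqrt (1/(J:ℝ)) ≤ ε := by
      have h1 : C^2/ε^2 ≤ (J:ℝ) := by
        refine le_trans (Nat.le_ceil _) ?_
        exact_mod_cast Nat.le_succ _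
      have h2 : C^2 ≤ (J:ℝ) * ε^2 := by
        rw [div_le_iff₀ (by positivity)] at h1
        linarith
      have h3 : C ≤ Real.sqrt (J:ℝ) * ε := by
        have h4 := Real.sqrt_le_sqrt h2
        rwa [Real.sqrt_sq hC0, Real.sqrt_mul hJR.le, Real.sqrt_sq hε.le] at h4
      rw [one_div, Real.sqrt_inv, mul_comm C, inv_mul_le_iff₀ (Real.sqrt_pos.mpr hJR)]
      calc C ≤ Real.sqrt (J:ℝ) * ε := h3
        _ = Real.sqrt (J:ℝ) * ε := rfl
    have hev : ∀ᶠ j in atTop, e (nj j) < (ε/(J:ℝ))^2 :=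
      hnj.eventually_lt_const (by positivity)
    obtain ⟨j₀, hj₀⟩ := hev.exists
    set a := nj j₀ with hadef
    have hapos : 0 < a := hnjpos j₀
    have hea : Real.sqrt (e a) ≤ ε / J := by
      rw [show ε/(J:ℝ) = Real.sqrt ((ε/(J:ℝ))^2) from (Real.sqrt_sq (by positivity)).symm]
      exact Real.sqrt_le_sqrt hj₀.le
    have hek : ∀ k : ℕ, Real.sqrt (e ((k + 1) * a)) ≤ ((k:ℝ) + 1) * Real.sqrt (e a) := by
      intro k
      induction k with
      | zero => simp
      | succ k ih =>
        have harg : (k + 1 + 1) * a = (k + 1) * a + a := by ring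
        rw [harg]
        have h5 := claim2 ((k + 1) * a) a
        push_cast
        push_cast at ih
        linarith [h5, ih]
    have hcd : ∀ k : ℕ, k < J → ‖c - d ((k + 1) * a)‖ ≤ ε := by
      intro k hk
      refine (claim1 _).trans ((hek k).trans ?_)
      have hk1 : ((k:ℝ) + 1) ≤ (J:ℝ) := by exact_mod_cast Nat.succ_le_of_lt hk
      calc ((k:ℝ) + 1) * Real.sqrt (e a) ≤ (J:ℝ) * (ε/(J:ℝ)) := by
            apply mul_le_mul hk1 hea (Real.sqrt_nonneg _) hJR.le
        _ = ε := by field_simp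
    have hsum : c = (∑ k ∈ range J, (c - d ((k + 1) * a))) / (J:ℂ)
        + (∑ k ∈ range J, d ((k + 1) * a)) / (J:ℂ) := by
      rw [← add_div, ← Finset.sum_add_distrib]
      simp only [sub_add_cancel, Finset.sum_const, card_range, nsmul_eq_mul]
      rw [mul_comm, mul_div_assoc, div_self hJC, mul_one]
    have hfirst : ‖(∑ k ∈ range J, (c - d ((k + 1) * a))) / (J:ℂ)‖ ≤ ε := by
      rw [norm_div, Complex.norm_natCast, div_le_iff₀ hJR]
      calc ‖∑ k ∈ range J, (c - d ((k + 1) * a))‖ ≤ ∑ k ∈ range J, ε :=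
            norm_sum_le_of_le _ fun k hk => hcd k (mem_range.mp hk)
        _ = ε * J := by simp [mul_comm]
    calc ‖c‖ = ‖(∑ k ∈ range J, (c - d ((k + 1) * a))) / (J:ℂ)
        + (∑ k ∈ range J, d ((k + 1) * a)) / (J:ℂ)‖ := by rw [← hsum]
      _ ≤ ‖(∑ k ∈ range J, (c - d ((k + 1) * a))) / (J:ℂ)‖
          + ‖(∑ k ∈ range J, d ((k + 1) * a)) / (J:ℂ)‖ := norm_add_le _ _
      _ ≤ ε + ε := add_le_add hfirst ((claim3 J hJpos a hapos).trans hCJ)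
      _ = 2 * ε := by ring
  by_contra hc0
  have hpos : 0 < ‖c‖ := norm_pos_iff.mpr hc0
  have := key (‖c‖/4) (by positivity)
  linarith
end

section
/- Let X be a compact metrizable space, T : X → X a continuous map, and ν a T-invariant Borel probability measure on X. Suppose (n_j)_{j≥1} is a sequence of positive integers such that for every continuous g : X → ℂ, lim_{j→∞} ∫_X |g(T^{n_j} x) − g(x)|² dν(x) = 0. Then for every Borel set F ⊆ X, lim_{j→∞} ν(T^{−n_j}F △ F) = 0, where △ denotes symmetric difference. -/
open Filter MeasureTheory
open scoped symmDiff

/-- If a `T`-invariant Borel probability measure on a compact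
metrizable space is rigid along `(n_j)` for continuous functions, then it is rigid
along `(n_j)` for Borel sets. -/
theorem rigidity_on_borel_sets
    {X : Type*} [TopologicalSpace X] [CompactSpace X] [TopologicalSpace.MetrizableSpace X]
    [MeasurableSpace X] [BorelSpace X]
    (T : X → X) (hT : Continuous T)
    (ν : Measure X) [IsProbabilityMeasure ν]
    (hinv : ∀ B : Set X, MeasurableSet B → ν (T ⁻¹' B) = ν B)
    (nj : ℕ → ℕ) (hpos : ∀ j, 0 < nj j)
    (hrig : ∀ g : C(X, ℂ), Filter.Tendsto
      (fun j => ∫ y, ‖g (T^[nj j] y) - g y‖ ^ 2 ∂ν) Filter.atTop (nhds 0)) :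
    ∀ F : Set X, MeasurableSet F →
      Filter.Tendsto (fun j => ν ((T^[nj j] ⁻¹' F) ∆ F)) Filter.atTop (nhds 0) := by
  intro F hF
  have hTm : Measurable T := hT.measurable
  have mp : MeasurePreserving T ν ν := by
    refine ⟨hTm, ?_⟩
    ext s hs
    rw [Measure.map_apply hTm hs]
    exact hinv s hs
  have mpn : ∀ n : ℕ, MeasurePreserving (T^[n]) ν ν := fun n => mp.iterate n
  set f : X → ℝ := F.indicator 1 with hfdef
  have hfmeas : Measurable f := measurable_one.indicator hF
  have hf01 : ∀ x, 0 ≤ f x ∧ f x ≤ 1 := by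
    intro x
    by_cases hx : x ∈ F <;> simp [hfdef, Set.indicator_apply, hx]
  -- integrability of bounded measurable functions
  have intbd : ∀ (h : X → ℝ), Measurable h → (∀ x, |h x| ≤ 1) → Integrable h ν := by
    intro h hm hb
    exact Integrable.mono' (integrable_const 1) hm.aestronglyMeasurable
      (ae_of_all _ fun x => by simpa using hb x)
  -- key identity
  have key : ∀ n : ℕ, (ν ((T^[n] ⁻¹' F) ∆ F)).toReal = ∫ x, (f (T^[n] x) - f x) ^ 2 ∂ν := by
    intro n
    have hident : (fun x => (f (T^[n] x) - f x) ^ 2)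
        = Set.indicator ((T^[n] ⁻¹' F) ∆ F) (1 : X → ℝ) := by
      funext x
      by_cases h1 : T^[n] x ∈ F <;> by_cases h2 : x ∈ F <;>
        simp [hfdef, Set.indicator_apply, Set.mem_symmDiff, h1, h2]
    rw [hident, integral_indicator_one (((hTm.iterate n) hF).symmDiff hF)]
    rfl
  -- reduce to a real-valued limit
  have hfin : ∀ j, ν ((T^[nj j] ⁻¹' F) ∆ F) ≠ ⊤ := fun j => measure_ne_top ν _
  have hreal : Tendsto (fun j => (ν ((T^[nj j] ⁻¹' F) ∆ F)).toReal) atTop (nhds 0) := by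
    simp only [key]
    rw [NormedAddCommGroup.tendsto_nhds_zero]
    intro ε hε
    -- find a good continuous approximation g of f
    have hδ : (0 : ℝ) < ε / 24 := by linarith
    have hδ' : ENNReal.ofReal (ε / 24) ≠ 0 := by
      simp [ENNReal.ofReal_eq_zero, not_le, hδ]
    obtain ⟨K, hKF, hKc, hKν⟩ := hF.exists_isClosed_diff_lt (measure_ne_top ν F) hδ'
    obtain ⟨U, hFU, hUo, hUν⟩ := hF.exists_isOpen_diff_lt (measure_ne_top ν F) hδ'
    have hUK : ν (U \ K) < ENNReal.ofReal (ε / 12) := by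
      have hsub : U \ K ⊆ (U \ F) ∪ (F \ K) := by
        intro x hx
        by_cases hxF : x ∈ F
        · exact Or.inr ⟨hxF, hx.2⟩
        · exact Or.inl ⟨hx.1, hxF⟩
      calc ν (U \ K) ≤ ν ((U \ F) ∪ (F \ K)) := measure_mono hsub
        _ ≤ ν (U \ F) + ν (F \ K) := measure_union_le _ _
        _ < ENNReal.ofReal (ε / 24) + ENNReal.ofReal (ε / 24) :=
            ENNReal.add_lt_add hUν.2 hKν
        _ = ENNReal.ofReal (ε / 12) := by
            rw [← ENNReal.ofReal_add hδ.le hδ.le]; congr 1; ring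
    have hUKr : (ν (U \ K)).toReal < ε / 12 :=
      (ENNReal.lt_ofReal_iff_toReal_lt (measure_ne_top ν _)).1 hUK
    obtain ⟨g, hg0, hg1, hg01⟩ :=
      exists_continuous_zero_one_of_isClosed hUo.isClosed_compl hKc
        (by simp [Set.disjoint_compl_left_iff_subset, hKF.trans hFU])
    have hgm : Measurable g := g.continuous.measurable
    have hgb : ∀ x, 0 ≤ g x ∧ g x ≤ 1 := fun x => ⟨(hg01 x).1, (hg01 x).2⟩
    -- the L² distance between g and f is small
    have hgf_pt : ∀ x, (g x - f x) ^ 2 ≤ Set.indicator (U \ K) (1 : X → ℝ) x := by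
      intro x
      by_cases hxK : x ∈ K
      · have h1 : g x = 1 := hg1 hxK
        have h2 : f x = 1 := by simp [hfdef, Set.indicator_apply, hKF hxK]
        have hz : (g x - f x) ^ 2 = 0 := by rw [h1, h2]; ring
        rw [hz]
        exact Set.indicator_nonneg (fun _ _ => zero_le_one) x
      · by_cases hxU : x ∈ U
        · have hmem : x ∈ U \ K := ⟨hxU, hxK⟩
          rw [Set.indicator_of_mem hmem]
          simp only [Pi.one_apply]
          have h1 := hgb x
          have h2 := hf01 x
          nlinarith [h1.1, h1.2, h2.1, h2.2]
        · have h1 : g x = 0 := hg0 hxU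
          have hxF : x ∉ F := fun h => hxU (hFU h)
          have h2 : f x = 0 := by simp [hfdef, Set.indicator_apply, hxF]
          have hz : (g x - f x) ^ 2 = 0 := by rw [h1, h2]; ring
          rw [hz]
          exact Set.indicator_nonneg (fun _ _ => zero_le_one) x
    have hintD : Integrable (fun x => (g x - f x) ^ 2) ν := by
      refine intbd _ ((hgm.sub hfmeas).pow_const 2) fun x => ?_
      have h1 := hgb x; have h2 := hf01 x
      rw [abs_le]; constructor <;> nlinarith [h1.1, h1.2, h2.1, h2.2]
    have hD : ∫ x, (g x - f x) ^ 2 ∂ν < ε / 12 := by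
      have hintI : Integrable (Set.indicator (U \ K) (1 : X → ℝ)) ν :=
        (integrable_const (1 : ℝ)).indicator (hUo.measurableSet.diff hKc.measurableSet)
      calc ∫ x, (g x - f x) ^ 2 ∂ν ≤ ∫ x, Set.indicator (U \ K) (1 : X → ℝ) x ∂ν :=
            integral_mono hintD hintI hgf_pt
        _ = (ν (U \ K)).toReal :=
            integral_indicator_one (hUo.measurableSet.diff hKc.measurableSet)
        _ < ε / 12 := hUKr
    -- the rigidity hypothesis for the complexification of g
    have hgc : Tendsto (fun j => ∫ y, (g (T^[nj j] y) - g y) ^ 2 ∂ν) atTop (nhds 0) := by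
      have := hrig ⟨fun x => (g x : ℂ), Complex.continuous_ofReal.comp g.continuous⟩
      convert this using 2 with j
      refine integral_congr_ae (ae_of_all _ fun y => ?_)
      simp only [ContinuousMap.coe_mk]
      rw [← Complex.ofReal_sub, Complex.norm_real, Real.norm_eq_abs, sq_abs]
    have hE : ∀ᶠ j in atTop, ∫ y, (g (T^[nj j] y) - g y) ^ 2 ∂ν < ε / 6 :=
      hgc.eventually (gt_mem_nhds (by linarith))
    filter_upwards [hE] with j hEj
    set n := nj j
    -- integrability of the three pieces
    have hintA : Integrable (fun x => (f (T^[n] x) - g (T^[n] x)) ^ 2) ν := by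
      refine intbd _ (((hfmeas.comp (hTm.iterate n)).sub
        (hgm.comp (hTm.iterate n))).pow_const 2) fun x => ?_
      have h1 := hgb (T^[n] x); have h2 := hf01 (T^[n] x)
      rw [abs_le]; constructor <;> nlinarith [h1.1, h1.2, h2.1, h2.2]
    have hintB : Integrable (fun x => (g (T^[n] x) - g x) ^ 2) ν := by
      refine intbd _ (((hgm.comp (hTm.iterate n)).sub hgm).pow_const 2) fun x => ?_
      have h1 := hgb (T^[n] x); have h2 := hgb x
      rw [abs_le]; constructor <;> nlinarith [h1.1, h1.2, h2.1, h2.2]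
    have hintT : Integrable (fun x => (f (T^[n] x) - f x) ^ 2) ν := by
      refine intbd _ (((hfmeas.comp (hTm.iterate n)).sub hfmeas).pow_const 2) fun x => ?_
      have h1 := hf01 (T^[n] x); have h2 := hf01 x
      rw [abs_le]; constructor <;> nlinarith [h1.1, h1.2, h2.1, h2.2]
    -- change of variables for the first piece
    have hA : ∫ x, (f (T^[n] x) - g (T^[n] x)) ^ 2 ∂ν = ∫ x, (g x - f x) ^ 2 ∂ν := by
      have hφm : AEStronglyMeasurable (fun x => (f x - g x) ^ 2) (ν.map (T^[n])) :=
        ((hfmeas.sub hgm).pow_const 2).aestronglyMeasurable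
      calc ∫ x, (f (T^[n] x) - g (T^[n] x)) ^ 2 ∂ν
          = ∫ x, (f x - g x) ^ 2 ∂(ν.map (T^[n])) :=
            (integral_map (mpn n).measurable.aemeasurable hφm).symm
        _ = ∫ x, (f x - g x) ^ 2 ∂ν := by rw [(mpn n).map_eq]
        _ = ∫ x, (g x - f x) ^ 2 ∂ν := by
            refine integral_congr_ae (ae_of_all _ fun x => ?_); ring
    -- pointwise quadratic bound and assembly
    have hpt : ∀ x, (f (T^[n] x) - f x) ^ 2 ≤
        3 * ((f (T^[n] x) - g (T^[n] x)) ^ 2 + (g (T^[n] x) - g x) ^ 2 + (g x - f x) ^ 2) := by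
      intro x; nlinarith [sq_nonneg (f (T^[n] x) - g (T^[n] x) - (g (T^[n] x) - g x)),
        sq_nonneg (f (T^[n] x) - g (T^[n] x) - (g x - f x)),
        sq_nonneg (g (T^[n] x) - g x - (g x - f x))]
    have hbound : ∫ x, (f (T^[n] x) - f x) ^ 2 ∂ν ≤
        3 * (∫ x, (f (T^[n] x) - g (T^[n] x)) ^ 2 ∂ν + ∫ x, (g (T^[n] x) - g x) ^ 2 ∂ν
          + ∫ x, (g x - f x) ^ 2 ∂ν) := by
      have h1 : ∫ x, (f (T^[n] x) - f x) ^ 2 ∂ν ≤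
          ∫ x, 3 * ((f (T^[n] x) - g (T^[n] x)) ^ 2 + (g (T^[n] x) - g x) ^ 2
            + (g x - f x) ^ 2) ∂ν :=
        integral_mono hintT (by
          have hAB : Integrable
              (fun x => (f (T^[n] x) - g (T^[n] x)) ^ 2 + (g (T^[n] x) - g x) ^ 2) ν :=
            hintA.add hintB
          have hABC : Integrable (fun x => (f (T^[n] x) - g (T^[n] x)) ^ 2
              + (g (T^[n] x) - g x) ^ 2 + (g x - f x) ^ 2) ν := hAB.add hintD
          exact hABC.const_mul 3) hpt
      have hAB : Integrable
          (fun x => (f (T^[n] x) - g (T^[n] x)) ^ 2 + (g (T^[n] x) - g x) ^ 2) ν :=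
        hintA.add hintB
      rw [integral_const_mul, integral_add hAB hintD, integral_add hintA hintB] at h1
      exact h1
    have hnonneg : 0 ≤ ∫ x, (f (T^[n] x) - f x) ^ 2 ∂ν :=
      integral_nonneg fun x => sq_nonneg _
    rw [Real.norm_eq_abs, abs_of_nonneg hnonneg]
    calc ∫ x, (f (T^[n] x) - f x) ^ 2 ∂ν
        ≤ 3 * (∫ x, (f (T^[n] x) - g (T^[n] x)) ^ 2 ∂ν + ∫ x, (g (T^[n] x) - g x) ^ 2 ∂ν
          + ∫ x, (g x - f x) ^ 2 ∂ν) := hbound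
      _ < 3 * (ε / 12 + ε / 6 + ε / 12) := by
          rw [hA]
          have := hD
          have := hEj
          gcongr
      _ = ε := by ring
  have := ENNReal.tendsto_ofReal hreal
  rw [ENNReal.ofReal_zero] at this
  exact this.congr fun j => ENNReal.ofReal_toReal (hfin j)
end

section
/- Let X be a compact metric space, T : X → X a homeomorphism, and ν a T-invariant Borel probability measure on X. Suppose ν has discrete spectrum: there exist an orthonormal (Hilbert) basis (f_l)_{l∈ℕ} of L²(X,ν;ℂ) and real numbers (λ_l)_{l∈ℕ} such that for each l, f_l(Tx) = e^{2πiλ_l}·f_l(x) for ν-almost every x. Then there exists a sequence (n_j)_{j≥1} of positive integers such that for every f ∈ L²(X,ν;ℂ), lim_{j→∞} ‖f ∘ T^{n_j} − f‖_{L²(ν)} = 0. -/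
open Filter MeasureTheory

/-- A homeomorphism of a compact metric space preserving a Borel
probability measure with discrete spectrum is rigid. -/
theorem rigid_of_discrete_spectrum
    {X : Type*} [MetricSpace X] [CompactSpace X]
    [MeasurableSpace X] [BorelSpace X]
    (T : X ≃ₜ X)
    (ν : Measure X) [IsProbabilityMeasure ν]
    (hinv : ∀ B : Set X, MeasurableSet B → ν (⇑T ⁻¹' B) = ν B)
    (b : HilbertBasis ℕ ℂ (Lp ℂ 2 ν)) (lam : ℕ → ℝ)
    (hb : ∀ l : ℕ, ∀ᵐ x ∂ν,
      (b l : Lp ℂ 2 ν) (T x) = Complex.exp (2 * Real.pi * Complex.I * lam l) * (b l : Lp ℂ 2 ν) x) :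
    ∃ nj : ℕ → ℕ, (∀ j, 0 < nj j) ∧
      ∀ f : Lp ℂ 2 ν,
        Filter.Tendsto (fun j => eLpNorm (fun x => f ((⇑T)^[nj j] x) - f x) 2 ν)
          Filter.atTop (nhds 0) := by
  classical
  -- T is measure preserving
  have hT : MeasurePreserving (⇑T) ν ν :=
    ⟨T.continuous.measurable, Measure.ext fun B hB => by
      rw [Measure.map_apply T.continuous.measurable hB]; exact hinv B hB⟩
  have hTn : ∀ n : ℕ, MeasurePreserving ((⇑T)^[n]) ν ν := fun n => hT.iterate n
  set e : ℕ → ℂ := fun l => Complex.exp (2 * Real.pi * Complex.I * lam l) with he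
  -- Koopman operators
  set U : ℕ → (Lp ℂ 2 ν →+ Lp ℂ 2 ν) :=
    fun n => Lp.compMeasurePreserving ((⇑T)^[n]) (hTn n) with hU
  have hUcoe : ∀ n (f : Lp ℂ 2 ν), (U n f : X → ℂ) =ᵐ[ν] fun x => f ((⇑T)^[n] x) :=
    fun n f => Lp.coeFn_compMeasurePreserving f (hTn n)
  have hUnorm : ∀ n (f : Lp ℂ 2 ν), ‖U n f‖ = ‖f‖ :=
    fun n f => Lp.norm_compMeasurePreserving f (hTn n)
  -- iterated eigenvalue relation
  have heig : ∀ l n, U n (b l) = (e l) ^ n • (b l : Lp ℂ 2 ν) := by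
    intro l n
    induction n with
    | zero =>
      simp only [pow_zero, one_smul]
      apply Lp.ext
      refine (hUcoe 0 (b l)).trans ?_
      simp only [Function.iterate_zero, id_eq]
      exact Filter.EventuallyEq.refl _ _
    | succ n ih =>
      apply Lp.ext
      have h1 := hUcoe (n + 1) (b l)
      have h2 : ∀ᵐ x ∂ν,
          (b l : Lp ℂ 2 ν) (T ((⇑T)^[n] x)) = e l * (b l : Lp ℂ 2 ν) ((⇑T)^[n] x) :=
        (hTn n).quasiMeasurePreserving.tendsto_ae.eventually (hb l)
      have h3 := hUcoe n (b l)
      have h4 : (U n (b l) : X → ℂ) =ᵐ[ν] fun x => e l ^ n * (b l : Lp ℂ 2 ν) x := by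
        rw [ih]
        filter_upwards [Lp.coeFn_smul (e l ^ n) (b l : Lp ℂ 2 ν)] with x hx
        simpa using hx
      have h5 : (fun x => (b l : Lp ℂ 2 ν) ((⇑T)^[n] x))
          =ᵐ[ν] fun x => e l ^ n * (b l : Lp ℂ 2 ν) x := h3.symm.trans h4
      filter_upwards [h1, h2, h5, Lp.coeFn_smul (e l ^ (n + 1)) (b l : Lp ℂ 2 ν)]
        with x hx1 hx2 hx5 hx6
      rw [hx1, hx6]
      have : (⇑T)^[n + 1] x = T ((⇑T)^[n] x) := Function.iterate_succ_apply' (⇑T) n x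
      rw [this, hx2, hx5]
      simp [pow_succ]
      ring
  have hUsmul : ∀ n (c : ℂ) (f : Lp ℂ 2 ν), U n (c • f) = c • U n f := by
    intro n c f
    apply Lp.ext
    have h2 : ∀ᵐ x ∂ν, (c • f : Lp ℂ 2 ν) ((⇑T)^[n] x) = (c • (f : X → ℂ)) ((⇑T)^[n] x) :=
      (hTn n).quasiMeasurePreserving.tendsto_ae.eventually (Lp.coeFn_smul c f)
    filter_upwards [hUcoe n (c • f), h2, Lp.coeFn_smul c (U n f), hUcoe n f]
      with x h1 h2' h3 h4
    rw [h1, h2', h3]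
    simp [h4]
  have hbnorm : ∀ l, ‖(b l : Lp ℂ 2 ν)‖ = 1 := fun l => b.orthonormal.1 l
  have hnormU : ∀ l n, ‖U n (b l) - (b l : Lp ℂ 2 ν)‖ = ‖e l ^ n - 1‖ := by
    intro l n
    rw [heig l n]
    calc ‖e l ^ n • (b l : Lp ℂ 2 ν) - (b l : Lp ℂ 2 ν)‖
        = ‖(e l ^ n - 1) • (b l : Lp ℂ 2 ν)‖ := by rw [sub_smul, one_smul]
      _ = ‖e l ^ n - 1‖ * ‖(b l : Lp ℂ 2 ν)‖ := norm_smul _ _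
      _ = ‖e l ^ n - 1‖ := by rw [hbnorm l, mul_one]
  -- simultaneous Diophantine approximation via compactness of ℕ → Circle
  set z : ℕ → Circle := fun l => Circle.exp (2 * Real.pi * lam l) with hz
  have hze : ∀ l, ((z l : Circle) : ℂ) = e l := by
    intro l
    rw [hz, he]
    simp only [Circle.coe_exp]
    congr 1
    push_cast
    ring
  set c : ℕ → (ℕ → Circle) := fun n l => (z l) ^ n with hc
  obtain ⟨p, -, φ, hφ, hcp⟩ :=
    isCompact_univ.tendsto_subseq (x := c) (fun n => Set.mem_univ _)
  set nj : ℕ → ℕ := fun j => φ (j + 1) - φ j with hnj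
  have hnjpos : ∀ j, 0 < nj j := fun j => Nat.sub_pos_of_lt (hφ (Nat.lt_succ_self j))
  have hkey : Tendsto (fun j => c (nj j)) atTop (nhds 1) := by
    have h1 : Tendsto (fun j => c (φ (j + 1))) atTop (nhds p) :=
      hcp.comp (tendsto_add_atTop_nat 1)
    have h2 : Tendsto (fun j => (c (φ j))⁻¹) atTop (nhds p⁻¹) := hcp.inv
    have h3 := h1.mul h2
    rw [mul_inv_cancel] at h3
    convert h3 using 2 with j
    have hle : φ j + nj j = φ (j + 1) :=
      Nat.add_sub_cancel' (le_of_lt (hφ (Nat.lt_succ_self j)))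
    have hadd : c (φ j + nj j) = c (φ j) * c (nj j) := funext fun l => pow_add _ _ _
    rw [← hle, hadd]
    rw [mul_comm (c (φ j)) (c (nj j)), mul_inv_cancel_right]
  have hkeyl : ∀ l, Tendsto (fun j => (e l) ^ (nj j)) atTop (nhds 1) := by
    intro l
    have h1 : Tendsto (fun j => c (nj j) l) atTop (nhds (1 : Circle)) := by
      have := tendsto_pi_nhds.mp hkey l
      simpa using this
    have h2 : Tendsto (fun j => ((c (nj j) l : Circle) : ℂ)) atTop (nhds ((1 : Circle) : ℂ)) :=
      (continuous_subtype_val.tendsto _).comp h1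
    have h3 : ∀ j, ((c (nj j) l : Circle) : ℂ) = e l ^ nj j := by
      intro j
      rw [hc]
      push_cast [← hze l]
      rfl
    simp only [h3, Circle.coe_one] at h2
    exact h2
  have hbasis : ∀ l, Tendsto (fun j => ‖U (nj j) (b l) - (b l : Lp ℂ 2 ν)‖) atTop (nhds 0) := by
    intro l
    have h := ((hkeyl l).sub (tendsto_const_nhds (x := (1 : ℂ)))).norm
    simp only [sub_self, norm_zero] at h
    have heq : (fun j => ‖U (nj j) (b l) - (b l : Lp ℂ 2 ν)‖)
        = fun j => ‖e l ^ nj j - 1‖ := funext fun j => hnormU l (nj j)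
    rw [heq]
    exact h
  -- main density argument
  have main : ∀ f : Lp ℂ 2 ν, Tendsto (fun j => ‖U (nj j) f - f‖) atTop (nhds 0) := by
    have hspan : ∀ f ∈ Submodule.span ℂ (Set.range ⇑b),
        Tendsto (fun j => ‖U (nj j) f - f‖) atTop (nhds 0) := by
      intro f hf
      induction hf using Submodule.span_induction with
      | mem x hx =>
        obtain ⟨l, rfl⟩ := hx
        exact hbasis l
      | zero =>
        simp only [map_zero, sub_zero, norm_zero]
        exact tendsto_const_nhds
      | add x y hx hy ihx ihy =>
        have hsum := ihx.add ihy
        rw [add_zero] at hsum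
        refine squeeze_zero (fun j => norm_nonneg _) (fun j => ?_) hsum
        rw [map_add]
        calc ‖U (nj j) x + U (nj j) y - (x + y)‖
            = ‖(U (nj j) x - x) + (U (nj j) y - y)‖ := by congr 1; abel
          _ ≤ ‖U (nj j) x - x‖ + ‖U (nj j) y - y‖ := norm_add_le _ _
      | smul a x hx ih =>
        have h := ih.const_mul ‖a‖
        rw [mul_zero] at h
        have heq : (fun j => ‖U (nj j) (a • x) - a • x‖)
            = fun j => ‖a‖ * ‖U (nj j) x - x‖ := by
          funext j
          rw [hUsmul, ← smul_sub, norm_smul]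
        rw [heq]
        exact h
    intro f
    have hf : f ∈ closure ((Submodule.span ℂ (Set.range ⇑b) : Submodule ℂ (Lp ℂ 2 ν)) :
        Set (Lp ℂ 2 ν)) := by
      have hd := b.dense_span
      have : f ∈ (Submodule.span ℂ (Set.range ⇑b)).topologicalClosure := hd ▸ Submodule.mem_top
      rw [← Submodule.topologicalClosure_coe]; exact this
    rw [Metric.tendsto_atTop]
    intro ε hε
    obtain ⟨g, hg, hd⟩ := Metric.mem_closure_iff.mp hf (ε / 3) (by positivity)
    have hgf : ‖f - g‖ < ε / 3 := by rwa [dist_eq_norm] at hd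
    have hgS := hspan g hg
    rw [Metric.tendsto_atTop] at hgS
    obtain ⟨N, hN⟩ := hgS (ε / 3) (by positivity)
    refine ⟨N, fun j hj => ?_⟩
    have h1 := hN j hj
    rw [Real.dist_0_eq_abs, abs_of_nonneg (norm_nonneg _)] at h1 ⊢
    have hdecomp : U (nj j) f - f = U (nj j) (f - g) + (U (nj j) g - g) + (g - f) := by
      rw [map_sub]; abel
    calc ‖U (nj j) f - f‖
        ≤ ‖U (nj j) (f - g)‖ + ‖U (nj j) g - g‖ + ‖g - f‖ := by
          rw [hdecomp]; exact norm_add₃_le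
      _ = ‖f - g‖ + ‖U (nj j) g - g‖ + ‖f - g‖ := by
          rw [hUnorm, norm_sub_rev g f]
      _ < ε / 3 + ε / 3 + ε / 3 := by linarith
      _ = ε := by ring
  -- conclude in terms of eLpNorm
  refine ⟨nj, hnjpos, fun f => ?_⟩
  have hnorm := main f
  have heq : (fun j => eLpNorm (fun x => f ((⇑T)^[nj j] x) - f x) 2 ν)
      = fun j => ENNReal.ofReal ‖U (nj j) f - f‖ := by
    funext j
    have hae : (fun x => f ((⇑T)^[nj j] x) - f x) =ᵐ[ν] ⇑(U (nj j) f - f) := by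
      filter_upwards [hUcoe (nj j) f, Lp.coeFn_sub (U (nj j) f) f] with x h1 h2
      rw [h2, Pi.sub_apply, h1]
    rw [eLpNorm_congr_ae hae, Lp.norm_def, ENNReal.ofReal_toReal (Lp.eLpNorm_ne_top _)]
  rw [heq]
  have h := ENNReal.tendsto_ofReal hnorm
  simpa using h
end
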